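/- arXiv:0912.0487 — 2 statements merged into one kernel-verified Lean document; each statement's English description precedes it below -/
import Mathlib

section
/- Let d ≥ 2, M ≥ 1 and N ∈ ℕ, and set A_N = { t ∈ [0, e^{-N/d}]^d : ht(T^N(x_t)) < 16M }. Then the d-dimensional Lebesgue measure of A_N satisfies m_{ℝ^d}(A_N) ≥ (15^d/16^d − 1/4^d)·e^{-N}. -/
open MeasureTheory Filter Topology Matrix ENNReal

noncomputable section

/-- `G = SL_{d+1}(ℝ)`. -/
abbrev SLR (d : ℕ) : Type := Matrix.SpecialLinearGroup (Fin (d+1)) ℝ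

instance (d : ℕ) : TopologicalSpace (SLR d) :=
  TopologicalSpace.induced (fun g => (g : Matrix (Fin (d+1)) (Fin (d+1)) ℝ)) inferInstance

/-- `Γ = SL_{d+1}(ℤ)`, viewed as a subgroup of `G`. -/
def Gamma (d : ℕ) : Subgroup (SLR d) :=
  (Matrix.SpecialLinearGroup.map (n := Fin (d+1)) (Int.castRingHom ℝ)).range

/-- `X = Γ\G`, the space of right cosets `Γg`. -/
abbrev Xspace (d : ℕ) : Type := Quotient (QuotientGroup.rightRel (Gamma d))

instance (d : ℕ) : MeasurableSpace (Xspace d) := borel _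

/-- The projection `g ↦ Γg`. -/
def mkX (d : ℕ) (g : SLR d) : Xspace d := Quotient.mk (QuotientGroup.rightRel (Gamma d)) g

/-- Right translation `Γg ↦ Γ(gh)` on `X`. -/
def rTrans (d : ℕ) (h : SLR d) : Xspace d → Xspace d :=
  Quotient.map' (· * h) (fun x y hxy => by
    rw [QuotientGroup.rightRel_apply] at hxy ⊢
    simpa [mul_assoc] using hxy)

/-- The diagonal matrix `diag(e^{1/d}, ..., e^{1/d}, e^{-1})`. -/
def aMat (d : ℕ) : Matrix (Fin (d+1)) (Fin (d+1)) ℝ :=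
  Matrix.diagonal (fun i => if (i : ℕ) < d then Real.exp (1/d) else Real.exp (-1))

/-- The element `a = diag(e^{1/d}, ..., e^{1/d}, e^{-1}) ∈ SL_{d+1}(ℝ)` (for `d ≥ 1`). -/
def aElt (d : ℕ) (hd : 0 < d) : SLR d :=
  ⟨aMat d, by
    rw [aMat, Matrix.det_diagonal, Fin.prod_univ_castSucc]
    simp only [Fin.coe_castSucc, Fin.is_lt, if_true, Fin.val_last, lt_irrefl, if_false]
    rw [Finset.prod_const, Finset.card_univ, Fintype.card_fin, ← Real.exp_nat_mul,
      ← Real.exp_add]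
    rw [mul_one_div, div_self (Nat.cast_ne_zero.mpr hd.ne')]
    simp⟩

/-- The transformation `T(x) = xa` on `X`. -/
def Tmap (d : ℕ) (hd : 0 < d) : Xspace d → Xspace d := rTrans d (aElt d hd)

/-- The maximum norm of a vector in `ℝ^{d+1}`. -/
def vnorm (d : ℕ) (v : Fin (d+1) → ℝ) : ℝ := ⨆ i, |v i|

/-- The maximum norm on `(d+1) × (d+1)` matrices. -/
def mnorm (d : ℕ) (A : Matrix (Fin (d+1)) (Fin (d+1)) ℝ) : ℝ :=
  ⨆ p : Fin (d+1) × Fin (d+1), |A p.1 p.2|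

/-- The length of a shortest nonzero vector of the lattice `ℤ^{d+1} g`. -/
def shortestLen (d : ℕ) (g : SLR d) : ℝ :=
  ⨅ v : {v : Fin (d+1) → ℤ // v ≠ 0},
    vnorm d ((fun i => ((v.1 i : ℝ))) ᵥ* (g : Matrix (Fin (d+1)) (Fin (d+1)) ℝ))

/-- The height of a lattice: the inverse of the length of a shortest nonzero vector. -/
def htX (d : ℕ) (x : Xspace d) : ℝ := (shortestLen d x.out)⁻¹

/-- `X_{<M}`. -/
def Xlt (d : ℕ) (M : ℝ) : Set (Xspace d) := {x | htX d x < M}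

/-- `X_{≥M}`. -/
def Xge (d : ℕ) (M : ℝ) : Set (Xspace d) := {x | M ≤ htX d x}

/-- `μ` is invariant under `T`. -/
def TInvariant {α : Type*} [MeasurableSpace α] (T : α → α) (μ : Measure α) : Prop :=
  ∀ s : Set α, MeasurableSet s → μ (T ⁻¹' s) = μ s

/-- A finite measurable partition of `α` (mod `μ`-null sets). -/
def IsMeasPartition {α : Type*} [MeasurableSpace α] (μ : Measure α) (P : Finset (Set α)) : Prop :=
  (∀ A ∈ P, MeasurableSet A) ∧ μ (⋃ A ∈ P, A)ᶜ = 0 ∧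
    ∀ A ∈ P, ∀ B ∈ P, A ≠ B → μ (A ∩ B) = 0

/-- The entropy `H_μ(P ∨ T⁻¹P ∨ ⋯ ∨ T^{-(n-1)}P)` of the `n`-fold dynamical refinement of the
partition `P`. -/
def joinEntropy {α : Type*} [MeasurableSpace α] (T : α → α) (μ : Measure α)
    (P : Finset (Set α)) (n : ℕ) : ℝ :=
  ∑ f ∈ Fintype.piFinset (fun _ : Fin n => P),
    Real.negMulLog ((μ (⋂ i : Fin n, T^[(i : ℕ)] ⁻¹' f i)).toReal)

/-- The dynamical entropy `h_μ(T, P) = lim_n H_μ(⋁_{i<n} T^{-i}P)/n = inf_n H_n/n`. -/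
def dynEntropy {α : Type*} [MeasurableSpace α] (T : α → α) (μ : Measure α)
    (P : Finset (Set α)) : ℝ≥0∞ :=
  ⨅ n : ℕ, ENNReal.ofReal (joinEntropy T μ P (n+1) / (n+1))

/-- The measure-theoretic (Kolmogorov–Sinai) entropy `h_μ(T)`, as the supremum of the dynamical
entropies over all finite measurable partitions. -/
def mEntropy {α : Type*} [MeasurableSpace α] (T : α → α) (μ : Measure α) : ℝ≥0∞ :=
  ⨆ P : {P : Finset (Set α) // IsMeasPartition μ P}, dynEntropy T μ P.1

/-- `μ` is a weak* limit of the sequence `μs` if for some subsequence the integrals of every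
compactly supported continuous function converge. -/
def IsWeakStarLimit {α : Type*} [TopologicalSpace α] [MeasurableSpace α]
    (μs : ℕ → Measure α) (μ : Measure α) : Prop :=
  ∃ φ : ℕ → ℕ, StrictMono φ ∧
    ∀ f : α → ℝ, Continuous f → HasCompactSupport f →
      Tendsto (fun k => ∫ x, f x ∂(μs (φ k))) atTop (𝓝 (∫ x, f x ∂μ))

/-- Abstract left-invariant metric on `G = SL_{d+1}(ℝ)`, standing for (the distance function of)
a left-invariant Riemannian metric. -/
structure GMetric (d : ℕ) where
  dist : SLR d → SLR d → ℝ
  nonneg : ∀ g h, 0 ≤ dist g h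
  eq_zero_iff : ∀ g h, dist g h = 0 ↔ g = h
  symm : ∀ g h, dist g h = dist h g
  triangle : ∀ g h k, dist g k ≤ dist g h + dist h k
  leftInvariant : ∀ g h k, dist (g * h) (g * k) = dist h k

/-- `d_X(Γg₁, Γg₂) = inf_{γ ∈ Γ} d_G(g₁, γg₂)`. -/
def dXq (d : ℕ) (D : GMetric d) (x y : Xspace d) : ℝ :=
  ⨅ γ : Gamma d, D.dist x.out ((γ : SLR d) * y.out)

/-- The rescaling property of the metric: `d_G(1,g) < ‖1-g‖ < c₀ d_G(1,g)` on the
ball of radius `η₀` about the identity. -/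
def MetricComparison (d : ℕ) (D : GMetric d) (η₀ c₀ : ℝ) : Prop :=
  0 < η₀ ∧ η₀ < 1 ∧ 1 < c₀ ∧
    ∀ g : SLR d, g ≠ 1 → D.dist 1 g < η₀ →
      D.dist 1 g < mnorm d (1 - (g : Matrix (Fin (d+1)) (Fin (d+1)) ℝ)) ∧
      mnorm d (1 - (g : Matrix (Fin (d+1)) (Fin (d+1)) ℝ)) < c₀ * D.dist 1 g

/-- `r` is an injectivity radius of `Y ⊆ X`: for every `x ∈ Y`, the map `g ↦ xg` is an isometry
from the radius-`r` ball in `G` onto the radius-`r` ball about `x` in `X`. -/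
def IsInjRadius (d : ℕ) (D : GMetric d) (r : ℝ) (Y : Set (Xspace d)) : Prop :=
  ∀ x ∈ Y,
    (∀ g h : SLR d, D.dist 1 g < r → D.dist 1 h < r →
      dXq d D (rTrans d g x) (rTrans d h x) = D.dist g h) ∧
    ∀ y : Xspace d, dXq d D x y < r → ∃ g : SLR d, D.dist 1 g < r ∧ y = rTrans d g x

/-- `E` is an `(n, ε)`-separated set for `T`. -/
def IsSeparatedSet (d : ℕ) (D : GMetric d) (T : Xspace d → Xspace d) (n : ℕ) (ε : ℝ)
    (E : Set (Xspace d)) : Prop :=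
  ∀ x ∈ E, ∀ y ∈ E, x ≠ y → ∃ i < n, ε ≤ dXq d D (T^[i] x) (T^[i] y)

/-- The matrix `g_t`: first `d` diagonal entries `M^{1/d}`, last row `(t₁/M, …, t_d/M, 1/M)`,
zeros elsewhere. -/
def gMat (d : ℕ) (M : ℝ) (t : Fin d → ℝ) : Matrix (Fin (d+1)) (Fin (d+1)) ℝ :=
  Matrix.of fun i j =>
    if hi : (i : ℕ) < d then (if i = j then M ^ (1/(d:ℝ)) else 0)
    else if hj : (j : ℕ) < d then t ⟨j, hj⟩ / M else 1 / M

lemma gMat_lowerTriangular (d : ℕ) (M : ℝ) (t : Fin d → ℝ) :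
    ∀ i j : Fin (d+1), i < j → gMat d M t i j = 0 := by
  intro i j hij
  have hi : (i : ℕ) < d := by
    have := j.isLt
    have := (Fin.lt_iff_val_lt_val.mp hij)
    omega
  simp [gMat, hi, Fin.ne_of_lt hij]

def gElt (d : ℕ) (hd : 0 < d) (M : ℝ) (hM : 0 < M) (t : Fin d → ℝ) : SLR d :=
  ⟨gMat d M t, by
    have hdet : (gMat d M t).det = ∏ i : Fin (d+1), gMat d M t i i := by
      apply Matrix.det_of_lowerTriangular
      intro i j hij
      exact gMat_lowerTriangular d M t i j hij
    rw [hdet, Fin.prod_univ_castSucc]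
    have h1 : ∀ i : Fin d, gMat d M t i.castSucc i.castSucc = M ^ (1/(d:ℝ)) := by
      intro i
      simp [gMat, Fin.is_lt]
    have h2 : gMat d M t (Fin.last d) (Fin.last d) = 1 / M := by
      simp [gMat]
    rw [Finset.prod_congr rfl (fun i _ => h1 i), h2, Finset.prod_const, Finset.card_univ,
      Fintype.card_fin, ← Real.rpow_natCast (M ^ (1/(d:ℝ))) d, ← Real.rpow_mul hM.le]
    rw [one_div, inv_mul_cancel₀ (Nat.cast_ne_zero.mpr hd.ne'), Real.rpow_one]
    field_simp⟩

/-- The unstable horospherical subgroup `U⁺` of `a`: identity matrices except for the first `d`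
entries of the last row. -/
def Uplus (d : ℕ) : Set (SLR d) :=
  {g | ∃ u : Fin d → ℝ, (g : Matrix (Fin (d+1)) (Fin (d+1)) ℝ) =
    (1 : Matrix (Fin (d+1)) (Fin (d+1)) ℝ) +
      Matrix.of (fun (i j : Fin (d+1)) => if h : (i : ℕ) = d ∧ (j : ℕ) < d then u ⟨j, h.2⟩ else 0)}

/-- The stable horospherical subgroup `U⁻` of `a`: identity matrices except for the first `d`
entries of the last column. -/
def Uminus (d : ℕ) : Set (SLR d) :=
  {g | ∃ u : Fin d → ℝ, (g : Matrix (Fin (d+1)) (Fin (d+1)) ℝ) =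
    (1 : Matrix (Fin (d+1)) (Fin (d+1)) ℝ) +
      Matrix.of (fun (i j : Fin (d+1)) => if h : (i : ℕ) < d ∧ (j : ℕ) = d then u ⟨i, h.1⟩ else 0)}

end

lemma rTrans_mkX (d : ℕ) (h g : SLR d) : rTrans d h (mkX d g) = mkX d (g * h) := rfl

lemma Tmap_iter (d : ℕ) (hd0 : 0 < d) (N : ℕ) (g : SLR d) :
    (Tmap d hd0)^[N] (mkX d g) = mkX d (g * (aElt d hd0)^N) := by
  induction N generalizing g with
  | zero => simp [mkX]
  | succ n ih =>
    rw [Function.iterate_succ_apply]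
    have h1 : Tmap d hd0 (mkX d g) = mkX d (g * aElt d hd0) := rfl
    rw [h1, ih, mul_assoc, ← pow_succ']

lemma out_mkX (d : ℕ) (B : SLR d) : ∃ γ : Gamma d, (mkX d B).out = (γ : SLR d) * B := by
  have h : Quotient.mk (QuotientGroup.rightRel (Gamma d)) (mkX d B).out = mkX d B :=
    Quotient.out_eq _
  have h2 : B * ((mkX d B).out)⁻¹ ∈ Gamma d :=
    QuotientGroup.rightRel_apply.mp (Quotient.exact h)
  exact ⟨(⟨B * (mkX d B).out⁻¹, h2⟩ : Gamma d)⁻¹, by simp [_root_.mul_inv_rev, mul_assoc]⟩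

lemma aElt_pow_coe (d : ℕ) (hd0 : 0 < d) (N : ℕ) :
    (((aElt d hd0)^N : SLR d) : Matrix (Fin (d+1)) (Fin (d+1)) ℝ) =
      Matrix.diagonal (fun i : Fin (d+1) => if (i : ℕ) < d then Real.exp ((N:ℝ)/d) else Real.exp (-(N:ℝ))) := by
  rw [Matrix.SpecialLinearGroup.coe_pow]
  have h0 : ((aElt d hd0 : SLR d) : Matrix (Fin (d+1)) (Fin (d+1)) ℝ) = aMat d := rfl
  have hfn : ((fun i : Fin (d+1) => if (i:ℕ) < d then Real.exp (1/(d:ℝ)) else Real.exp (-1)) ^ N)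
      = fun i : Fin (d+1) => if (i:ℕ) < d then Real.exp ((N:ℝ)/d) else Real.exp (-(N:ℝ)) := by
    funext i
    rw [Pi.pow_apply]
    split_ifs with h
    · rw [← Real.exp_nat_mul, mul_one_div]
    · rw [← Real.exp_nat_mul]; ring_nf
  rw [h0, aMat, Matrix.diagonal_pow, hfn]

lemma vecMul_gMat_castSucc (d : ℕ) (M : ℝ) (t : Fin d → ℝ) (u : Fin (d+1) → ℝ) (j : Fin d) :
    (u ᵥ* gMat d M t) (Fin.castSucc j) =
      u (Fin.castSucc j) * M ^ (1/(d:ℝ)) + u (Fin.last d) * (t j / M) := by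
  rw [Matrix.vecMul, dotProduct, Fin.sum_univ_castSucc]
  have h1 : ∀ k : Fin d, gMat d M t (Fin.castSucc k) (Fin.castSucc j) =
      if k = j then M ^ (1/(d:ℝ)) else 0 := by
    intro k
    simp only [gMat, Matrix.of_apply, Fin.coe_castSucc, Fin.is_lt, dif_pos]
    congr 1
    simp [Fin.castSucc_inj, eq_iff_iff]
  have h2 : gMat d M t (Fin.last d) (Fin.castSucc j) = t j / M := by
    simp [gMat]
  rw [h2]
  congr 1
  rw [Finset.sum_congr rfl (fun k _ => by rw [h1 k])]
  simp [mul_ite, mul_zero, Finset.sum_ite_eq']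

lemma vecMul_gMat_last (d : ℕ) (M : ℝ) (t : Fin d → ℝ) (u : Fin (d+1) → ℝ) :
    (u ᵥ* gMat d M t) (Fin.last d) = u (Fin.last d) * (1/M) := by
  rw [Matrix.vecMul, dotProduct, Fin.sum_univ_castSucc]
  have h1 : ∀ k : Fin d, gMat d M t (Fin.castSucc k) (Fin.last d) = 0 := by
    intro k
    have : ¬ (Fin.castSucc k = Fin.last d) := by
      simp [Fin.ext_iff]; omega
    simp [gMat, this]
  have h2 : gMat d M t (Fin.last d) (Fin.last d) = 1/M := by simp [gMat]
  rw [h2, Finset.sum_congr rfl (fun k _ => by rw [h1 k])]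
  simp

lemma le_vnorm (d : ℕ) (w : Fin (d+1) → ℝ) (i : Fin (d+1)) : |w i| ≤ vnorm d w :=
  le_ciSup (f := fun i => |w i|) (Set.Finite.bddAbove (Set.finite_range _)) i

lemma shortest_vec_ge (d : ℕ) (hd0 : 0 < d) (M : ℝ) (hM0 : 0 < M) (hM : 1 ≤ M) (N : ℕ)
    (t : Fin d → ℝ)
    (hG : ∀ m : ℕ, 1 ≤ m → m ≤ Nat.floor (Real.exp N / 16) →
       ∃ i : Fin d, ∀ n : ℤ, Real.exp (-(N:ℝ)/d)/8 ≤ |n * (M * M^(1/(d:ℝ))) + m * t i|)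
    (γ : SLR d) (hγ : γ ∈ Gamma d) (v : Fin (d+1) → ℤ) (hv : v ≠ 0) :
    min 1 (min (((Nat.floor (Real.exp N / 16) : ℝ) + 1) * Real.exp (-(N:ℝ)) / M) (1/(8*M)))
      ≤ vnorm d ((fun i => ((v i : ℝ))) ᵥ*
          ((γ * gElt d hd0 M hM0 t * (aElt d hd0)^N : SLR d) :
            Matrix (Fin (d+1)) (Fin (d+1)) ℝ)) := by
  obtain ⟨γz, hγz⟩ := hγ
  set K : ℕ := Nat.floor (Real.exp N / 16) with hK
  set Mp : ℝ := M ^ (1/(d:ℝ)) with hMp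
  set u : Fin (d+1) → ℤ := v ᵥ* (γz : Matrix (Fin (d+1)) (Fin (d+1)) ℤ) with hu
  have hMp1 : 1 ≤ Mp := Real.one_le_rpow hM (by positivity)
  have huv : u ᵥ* ((γz⁻¹ : Matrix.SpecialLinearGroup (Fin (d+1)) ℤ) :
      Matrix (Fin (d+1)) (Fin (d+1)) ℤ) = v := by
    rw [hu, Matrix.vecMul_vecMul, ← Matrix.SpecialLinearGroup.coe_mul, mul_inv_cancel,
      Matrix.SpecialLinearGroup.coe_one, Matrix.vecMul_one]
  have hune : u ≠ 0 := by
    intro h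
    apply hv
    rw [← huv, h, Matrix.zero_vecMul]
  have hcast : (fun i => ((v i : ℝ))) ᵥ* (γ : Matrix (Fin (d+1)) (Fin (d+1)) ℝ)
      = fun i => ((u i : ℝ)) := by
    funext i
    rw [← hγz]
    have h1 := (RingHom.map_vecMul (Int.castRingHom ℝ)
      (γz : Matrix (Fin (d+1)) (Fin (d+1)) ℤ) v i).symm
    exact h1
  set F : Fin (d+1) → ℝ :=
    fun i => if (i : ℕ) < d then Real.exp ((N:ℝ)/d) else Real.exp (-(N:ℝ)) with hF
  have hw : (fun i => ((v i : ℝ))) ᵥ*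
      ((γ * gElt d hd0 M hM0 t * (aElt d hd0)^N : SLR d) :
        Matrix (Fin (d+1)) (Fin (d+1)) ℝ)
      = fun j => ((fun i => ((u i : ℝ))) ᵥ* gMat d M t) j * F j := by
    rw [Matrix.SpecialLinearGroup.coe_mul, Matrix.SpecialLinearGroup.coe_mul, aElt_pow_coe,
      ← Matrix.vecMul_vecMul, ← Matrix.vecMul_vecMul, hcast]
    funext j
    exact Matrix.vecMul_diagonal _ _ _
  rw [hw]
  set m : ℤ := u (Fin.last d) with hm
  have hM0' : (0:ℝ) < 16 * M := by linarith
  by_cases hm0 : m = 0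
  · -- some earlier coordinate is nonzero
    have : ∃ j : Fin (d+1), u j ≠ 0 := by
      by_contra h
      push_neg at h
      exact hune (funext h)
    obtain ⟨j, hj⟩ := this
    have hjd : (j : ℕ) < d := by
      rcases lt_or_eq_of_le (Nat.lt_succ_iff.mp j.isLt) with h | h
      · exact h
      · exfalso; apply hj; rw [← hm0, hm]; congr 1; exact Fin.ext h
    set j' : Fin d := ⟨j, hjd⟩ with hj'
    have hcs : Fin.castSucc j' = j := by ext; rfl
    refine le_trans ?_ (le_vnorm d _ (Fin.castSucc j'))
    rw [vecMul_gMat_castSucc]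
    have h1 : (1:ℝ) ≤ |(u j : ℝ)| := by
      rw [← Int.cast_abs]
      exact_mod_cast Int.one_le_abs hj
    have h2 : ((u (Fin.last d) : ℝ)) = 0 := by
      rw [← hm, hm0]; norm_num
    have hexp : (1:ℝ) ≤ Real.exp ((N:ℝ)/d) := by
      apply Real.one_le_exp; positivity
    have hFj : F (Fin.castSucc j') = Real.exp ((N:ℝ)/d) := by
      simp only [hF, Fin.coe_castSucc]
      rw [if_pos hjd]
    rw [h2, zero_mul, add_zero, hFj, hcs, abs_mul, abs_mul]
    have : (1:ℝ) ≤ |(u j : ℝ)| * |Mp| * |Real.exp ((N:ℝ)/d)| := by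
      have hMpa : (1:ℝ) ≤ |Mp| := le_trans hMp1 (le_abs_self _)
      have hea : (1:ℝ) ≤ |Real.exp ((N:ℝ)/d)| := le_trans hexp (le_abs_self _)
      calc (1:ℝ) = 1 * 1 * 1 := by ring
      _ ≤ |(u j : ℝ)| * |Mp| * |Real.exp ((N:ℝ)/d)| := by
          apply mul_le_mul _ hea (by norm_num) (by positivity)
          apply mul_le_mul h1 hMpa (by norm_num) (abs_nonneg _)
    refine le_trans ?_ this
    exact min_le_left _ _
  · have hFlast : F (Fin.last d) = Real.exp (-(N:ℝ)) := by
      simp only [hF, Fin.val_last]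
      rw [if_neg (lt_irrefl d)]
    by_cases h2 : (K:ℤ) < |m|
    · -- large m : use last coordinate
      refine le_trans ?_ (le_vnorm d _ (Fin.last d))
      rw [vecMul_gMat_last, hFlast, ← hm]
      have hm1 : (K:ℝ) + 1 ≤ |(m:ℝ)| := by
        rw [← Int.cast_abs]
        exact_mod_cast h2
      have e1 : |(m:ℝ) * (1/M) * Real.exp (-(N:ℝ))| = |(m:ℝ)| * Real.exp (-(N:ℝ)) / M := by
        rw [abs_mul, abs_mul, abs_of_pos (by positivity : (0:ℝ) < 1/M),
          abs_of_pos (Real.exp_pos _)]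
        ring
      rw [e1]
      refine le_trans (min_le_right _ _) (le_trans (min_le_left _ _) ?_)
      gcongr
    · -- middle m : use hG
      push_neg at h2
      set mm : ℕ := m.natAbs with hmm
      have hmm1 : 1 ≤ mm := Int.natAbs_pos.mpr hm0
      have hmm2 : mm ≤ K := by
        have h2' := h2
        rw [Int.abs_eq_natAbs] at h2'
        exact_mod_cast h2'
      obtain ⟨i, hi⟩ := hG mm hmm1 hmm2
      refine le_trans ?_ (le_vnorm d _ (Fin.castSucc i))
      rw [vecMul_gMat_castSucc]
      have hFi : F (Fin.castSucc i) = Real.exp ((N:ℝ)/d) := by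
        simp only [hF, Fin.coe_castSucc]
        rw [if_pos i.isLt]
      rw [hFi, ← hm]
      have key : Real.exp (-(N:ℝ)/d)/8 ≤ |(u (Fin.castSucc i) : ℝ) * (M * Mp) + (m:ℝ) * t i| := by
        rcases le_or_gt 0 m with hsgn | hsgn
        · have : ((mm:ℤ) : ℝ) = (m:ℝ) := by
            rw [hmm, Int.natAbs_of_nonneg hsgn]
          have h3 := hi (u (Fin.castSucc i))
          rw [show (((mm:ℕ) : ℝ)) = ((mm:ℤ) : ℝ) by push_cast; ring, this] at h3
          exact h3
        · have hneg : ((mm:ℤ) : ℝ) = -(m:ℝ) := by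
            rw [hmm, Int.ofNat_natAbs_of_nonpos hsgn.le]; push_cast; ring
          have h3 := hi (-(u (Fin.castSucc i)))
          rw [show (((mm:ℕ) : ℝ)) = ((mm:ℤ) : ℝ) by push_cast; ring, hneg] at h3
          push_cast at h3
          rw [show -(u (Fin.castSucc i) : ℝ) * (M * Mp) + -(m:ℝ) * t i
              = -((u (Fin.castSucc i) : ℝ) * (M * Mp) + (m:ℝ) * t i) by ring, abs_neg] at h3
          exact h3
      have hMne : M ≠ 0 := ne_of_gt hM0
      have e2 : (u (Fin.castSucc i) : ℝ) * Mp + (m:ℝ) * (t i / M)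
          = ((u (Fin.castSucc i) : ℝ) * (M * Mp) + (m:ℝ) * t i) / M := by
        field_simp
      rw [e2, abs_mul, abs_div, abs_of_pos hM0, abs_of_pos (Real.exp_pos _)]
      refine le_trans (min_le_right _ _) (le_trans (min_le_right _ _) ?_)
      have hr : Real.exp (-(N:ℝ)/d) * Real.exp ((N:ℝ)/d) = 1 := by
        rw [← Real.exp_add, neg_div, neg_add_cancel, Real.exp_zero]
      calc (1:ℝ)/(8*M) = (Real.exp (-(N:ℝ)/d)/8) / M * Real.exp ((N:ℝ)/d) := by
            field_simp
            rw [neg_div] at hr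
            nlinarith [hr]
        _ ≤ |(u (Fin.castSucc i) : ℝ) * (M * Mp) + (m:ℝ) * t i| / M * Real.exp ((N:ℝ)/d) := by
            gcongr

lemma htX_lt_of_good (d : ℕ) (hd0 : 0 < d) (M : ℝ) (hM0 : 0 < M) (hM : 1 ≤ M) (N : ℕ)
    (t : Fin d → ℝ)
    (hG : ∀ m : ℕ, 1 ≤ m → m ≤ Nat.floor (Real.exp N / 16) →
       ∃ i : Fin d, ∀ n : ℤ, Real.exp (-(N:ℝ)/d)/8 ≤ |n * (M * M^(1/(d:ℝ))) + m * t i|) :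
    htX d ((Tmap d hd0)^[N] (mkX d (gElt d hd0 M hM0 t))) < 16*M := by
  rw [Tmap_iter]
  set B : SLR d := gElt d hd0 M hM0 t * (aElt d hd0)^N with hB
  obtain ⟨γ, hout⟩ := out_mkX d B
  set K : ℕ := Nat.floor (Real.exp N / 16) with hK
  set s : ℝ := min 1 (min (((K:ℝ) + 1) * Real.exp (-(N:ℝ)) / M) (1/(8*M))) with hs
  haveI : Nonempty {v : Fin (d+1) → ℤ // v ≠ 0} :=
    ⟨⟨fun _ => 1, fun h => by simpa using congrFun h 0⟩⟩
  have hlb : s ≤ shortestLen d (Quotient.out (mkX d B)) := by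
    rw [shortestLen]
    refine le_ciInf fun v => ?_
    rw [hout, ← mul_assoc]
    exact shortest_vec_ge d hd0 M hM0 hM N t hG (γ : SLR d) γ.2 v.1 v.2
  have hspos : 1/(16*M) < s := by
    rw [hs]
    have hM16 : (0:ℝ) < 16*M := by linarith
    refine lt_min ?_ (lt_min ?_ ?_)
    · rw [div_lt_one hM16]; linarith
    · rw [div_lt_div_iff₀ hM16 hM0]
      have h1 : Real.exp (N:ℝ) / 16 < (K:ℝ) + 1 := Nat.lt_floor_add_one _
      have h2 : Real.exp (-(N:ℝ)) * Real.exp ((N:ℝ)) = 1 := by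
        rw [← Real.exp_add, neg_add_cancel, Real.exp_zero]
      have h3 : Real.exp (-(N:ℝ)) * (Real.exp (N:ℝ)/16) < Real.exp (-(N:ℝ)) * ((K:ℝ)+1) :=
        mul_lt_mul_of_pos_left h1 (Real.exp_pos _)
      have h4 : Real.exp (-(N:ℝ)) * (Real.exp (N:ℝ)/16) = 1/16 := by
        rw [← mul_div_assoc, h2]
      rw [h4] at h3
      nlinarith
    · rw [div_lt_div_iff₀ hM16 (by linarith : (0:ℝ) < 8*M)]
      nlinarith
  have hs0 : (0:ℝ) < s := lt_trans (by positivity) hspos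
  rw [htX]
  calc (shortestLen d (Quotient.out (mkX d B)))⁻¹ ≤ s⁻¹ := by
        apply inv_anti₀ hs0 hlb
    _ < 16*M := by
        have := inv_strictAnti₀ (by positivity : (0:ℝ) < 1/(16*M)) hspos
        rwa [one_div, inv_inv] at this

lemma zeta2_bound : ∀ K : ℕ, ∑ m ∈ Finset.Icc 1 K, (1/(m:ℝ))^2 ≤ 2 - 1/(K:ℝ) := by
  intro K
  induction K with
  | zero => norm_num
  | succ n ih =>
    rw [Finset.sum_Icc_succ_top (by omega : 1 ≤ n+1)]
    rcases Nat.eq_zero_or_pos n with h | h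
    · subst h; norm_num
    · have hn : (1:ℝ) ≤ (n:ℝ) := by exact_mod_cast h
      have key : (1/((n:ℝ)+1))^2 ≤ 1/(n:ℝ) - 1/((n:ℝ)+1) := by
        rw [div_sub_div _ _ (by positivity) (by positivity)]
        rw [div_pow, one_pow, div_le_div_iff₀ (by positivity) (by positivity)]
        ring_nf
        nlinarith
      push_cast
      linarith [ih, key]

lemma volume_Cm (r : ℝ) (hr0 : 0 < r) (hr1 : r ≤ 1) (s' : ℝ) (hs1 : 1 ≤ s')
    (m : ℕ) (hm : 1 ≤ m) :
    volume (⋃ n ∈ Finset.Icc (0:ℤ) ⌊((m:ℝ)*r + r/8)/s'⌋,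
        Set.Ioo (((n:ℝ)*s' - r/8)/m) (((n:ℝ)*s' + r/8)/m))
      ≤ ENNReal.ofReal (if (m:ℝ)*r + r/8 < s' then r/(4*m) else 4*r^2/7) := by
  have hm1 : (1:ℝ) ≤ (m:ℝ) := by exact_mod_cast hm
  have hs0 : (0:ℝ) < s' := by linarith
  set nmax : ℤ := ⌊((m:ℝ)*r + r/8)/s'⌋ with hnmax
  have hnm0 : 0 ≤ nmax := Int.floor_nonneg.mpr (by positivity)
  have hlen : ∀ n : ℤ, volume (Set.Ioo (((n:ℝ)*s' - r/8)/m) (((n:ℝ)*s' + r/8)/m))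
      = ENNReal.ofReal ((r/4)/m) := by
    intro n
    rw [Real.volume_Ioo]
    congr 1
    field_simp
    ring
  have hcard : ((Finset.Icc (0:ℤ) nmax).card : ℝ) = (nmax:ℝ) + 1 := by
    rw [Int.card_Icc]
    have : ((nmax + 1 - 0).toNat : ℤ) = nmax + 1 := by
      rw [Int.toNat_of_nonneg (by omega)]; omega
    push_cast at this ⊢
    exact_mod_cast this
  have step1 : volume (⋃ n ∈ Finset.Icc (0:ℤ) nmax,
      Set.Ioo (((n:ℝ)*s' - r/8)/m) (((n:ℝ)*s' + r/8)/m))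
      ≤ ((Finset.Icc (0:ℤ) nmax).card : ℝ≥0∞) * ENNReal.ofReal ((r/4)/m) := by
    refine le_trans (measure_biUnion_finset_le _ _) ?_
    rw [Finset.sum_congr rfl (fun n _ => hlen n), Finset.sum_const, nsmul_eq_mul]
  refine le_trans step1 ?_
  have hmr : (0:ℝ) ≤ (r/4)/m := by positivity
  rw [← ENNReal.ofReal_natCast, ← ENNReal.ofReal_mul (by positivity)]
  apply ENNReal.ofReal_le_ofReal
  rw [hcard]
  split_ifs with hsmall
  · -- nmax = 0
    have h0 : nmax = 0 := by
      rw [hnmax, Int.floor_eq_zero_iff]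
      constructor
      · positivity
      · rw [div_lt_one hs0]; exact hsmall
    rw [h0]
    norm_num
    rw [div_div]
  · -- large m
    push_neg at hsmall
    have hfl : (nmax : ℝ) ≤ ((m:ℝ)*r + r/8)/s' := Int.floor_le _
    have hx : (7:ℝ)/8 ≤ (m:ℝ)*r := by nlinarith
    have hb : ((nmax:ℝ) + 1) * (r/4/m) ≤ (((m:ℝ)*r + r/8)/s' + 1) * (r/4/m) := by
      apply mul_le_mul_of_nonneg_right _ hmr
      linarith
    refine le_trans hb ?_
    have e1 : (((m:ℝ)*r + r/8)/s' + 1) * (r/4/m) = ((m:ℝ)*r + r/8 + s') * r / (4*m*s') := by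
      field_simp
    rw [e1, div_le_iff₀ (by positivity)]
    nlinarith [mul_nonneg (mul_nonneg hr0.le (sub_nonneg.mpr hs1)) (sub_nonneg.mpr hx),
      mul_nonneg (sub_nonneg.mpr hr1) (mul_nonneg hr0.le hs0.le),
      mul_nonneg (mul_nonneg hr0.le hs0.le) (sub_nonneg.mpr hsmall),
      mul_nonneg (mul_nonneg hr0.le (sub_nonneg.mpr hs1)) hs0.le]

lemma mem_Cm (d : ℕ) (r s' : ℝ) (hr0 : 0 < r) (hr1 : r ≤ 1) (hs1 : 1 ≤ s')
    (m : ℕ) (hm : 1 ≤ m) (t : Fin d → ℝ) (hcube : ∀ i, t i ∈ Set.Icc 0 r)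
    (hbad : ∀ i, ∃ n : ℤ, |(n:ℝ)*s' + m*t i| < r/8) (i : Fin d) :
    t i ∈ ⋃ n ∈ Finset.Icc (0:ℤ) ⌊((m:ℝ)*r + r/8)/s'⌋,
      Set.Ioo (((n:ℝ)*s' - r/8)/m) (((n:ℝ)*s' + r/8)/m) := by
  have hm1 : (1:ℝ) ≤ (m:ℝ) := by exact_mod_cast hm
  have hs0 : (0:ℝ) < s' := by linarith
  obtain ⟨n, hn⟩ := hbad i
  rw [abs_lt] at hn
  obtain ⟨hti0, htir⟩ := hcube i
  set k : ℤ := -n with hk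
  have hks : ((k:ℝ))*s' = -((n:ℝ)*s') := by rw [hk]; push_cast; ring
  have hmt0 : (0:ℝ) ≤ (m:ℝ)*t i := by positivity
  have hmtr : (m:ℝ)*t i ≤ (m:ℝ)*r := by nlinarith
  have hlow : ((k:ℝ))*s' < (m:ℝ)*t i + r/8 := by rw [hks]; nlinarith [hn.1]
  have hhigh : (m:ℝ)*t i < ((k:ℝ))*s' + r/8 := by rw [hks]; nlinarith [hn.2]
  have hk0 : 0 ≤ k := by
    by_contra hneg
    push_neg at hneg
    have : (k:ℝ) ≤ -1 := by
      have : k ≤ -1 := by omega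
      exact_mod_cast this
    have : (k:ℝ)*s' ≤ -s' := by nlinarith
    nlinarith
  have hkmax : k ≤ ⌊((m:ℝ)*r + r/8)/s'⌋ := by
    apply Int.le_floor.mpr
    rw [le_div_iff₀ hs0]
    nlinarith
  refine Set.mem_biUnion (Finset.mem_Icc.mpr ⟨hk0, hkmax⟩) ?_
  constructor
  · rw [div_lt_iff₀ (by linarith : (0:ℝ) < (m:ℝ))]
    nlinarith
  · rw [lt_div_iff₀ (by linarith : (0:ℝ) < (m:ℝ))]
    nlinarith

lemma numeric_bound (d : ℕ) (hd : 2 ≤ d) :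
    ((15:ℝ)/16)^d - ((1:ℝ)/4)^d ≤ 1 - (2*((1:ℝ)/4)^d + ((4:ℝ)/7)^d/16) := by
  have a1 : ((15:ℝ)/16)^d ≤ ((15:ℝ)/16)^2 :=
    pow_le_pow_of_le_one (by norm_num) (by norm_num) hd
  have a2 : ((1:ℝ)/4)^d ≤ ((1:ℝ)/4)^2 :=
    pow_le_pow_of_le_one (by norm_num) (by norm_num) hd
  have a3 : ((4:ℝ)/7)^d ≤ ((4:ℝ)/7)^2 :=
    pow_le_pow_of_le_one (by norm_num) (by norm_num) hd
  nlinarith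

theorem measure_AN_ge' (d : ℕ) (hd0 : 0 < d) (hd : 2 ≤ d) (M : ℝ) (hM0 : 0 < M) (hM : 1 ≤ M)
    (N : ℕ) :
    ENNReal.ofReal ((((15:ℝ)/16)^d - ((1:ℝ)/4)^d) * Real.exp (-(N:ℝ))) ≤
      volume {t : Fin d → ℝ |
        (∀ i, t i ∈ Set.Icc (0:ℝ) (Real.exp (-(N:ℝ)/(d:ℝ)))) ∧
        htX d ((Tmap d hd0)^[N] (mkX d (gElt d hd0 M hM0 t))) < 16*M} := by
  set r : ℝ := Real.exp (-(N:ℝ)/(d:ℝ)) with hr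
  set s' : ℝ := M * M^(1/(d:ℝ)) with hs'
  set K : ℕ := Nat.floor (Real.exp (N:ℝ) / 16) with hK
  have hr0 : 0 < r := Real.exp_pos _
  have hr1 : r ≤ 1 := by
    rw [hr, show (1:ℝ) = Real.exp 0 by rw [Real.exp_zero]]
    apply Real.exp_le_exp.mpr
    have : (0:ℝ) ≤ (N:ℝ)/(d:ℝ) := by positivity
    rw [neg_div]
    linarith
  have hMp1 : (1:ℝ) ≤ M^(1/(d:ℝ)) := Real.one_le_rpow hM (by positivity)
  have hs1 : (1:ℝ) ≤ s' := by rw [hs']; nlinarith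
  have hs0 : (0:ℝ) < s' := by linarith
  have hrd : r^d = Real.exp (-(N:ℝ)) := by
    rw [hr, ← Real.exp_nat_mul]
    congr 1
    field_simp
  set cube : Set (Fin d → ℝ) := {t : Fin d → ℝ | ∀ i, t i ∈ Set.Icc (0:ℝ) r} with hcube
  set Bad : ℕ → Set (Fin d → ℝ) :=
    fun m => {t : Fin d → ℝ | ∀ i, ∃ n : ℤ, |(n:ℝ)*s' + m*t i| < r/8} with hBad
  set BadU : Set (Fin d → ℝ) := ⋃ m ∈ Finset.Icc 1 K, Bad m with hBadU
  -- inclusion of good set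
  have h_sub : cube \ BadU ⊆ {t : Fin d → ℝ |
      (∀ i, t i ∈ Set.Icc (0:ℝ) r) ∧
      htX d ((Tmap d hd0)^[N] (mkX d (gElt d hd0 M hM0 t))) < 16*M} := by
    rintro t ⟨hc, hnb⟩
    refine ⟨hc, htX_lt_of_good d hd0 M hM0 hM N t ?_⟩
    intro m h1 h2
    have hnotbad : t ∉ Bad m := fun hb =>
      hnb (Set.mem_biUnion (Finset.mem_Icc.mpr ⟨h1, h2⟩) hb)
    rw [hBad] at hnotbad
    simp only [Set.mem_setOf_eq, not_forall, not_exists, not_lt] at hnotbad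
    obtain ⟨i, hi⟩ := hnotbad
    exact ⟨i, fun n => by
      have := hi n
      rw [hr] at this
      convert this using 2⟩
  -- cube volume
  have hcubevol : volume cube = ENNReal.ofReal (Real.exp (-(N:ℝ))) := by
    have hpi : cube = Set.pi Set.univ (fun _ : Fin d => Set.Icc (0:ℝ) r) := by
      ext t; rw [hcube, Set.mem_setOf_eq, Set.mem_univ_pi]
    rw [hpi, volume_pi_pi]
    simp only [Real.volume_Icc, sub_zero]
    rw [Finset.prod_const, Finset.card_univ, Fintype.card_fin,
      ← ENNReal.ofReal_pow hr0.le, hrd]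
  -- bad volume
  have hbadvol : volume (BadU ∩ cube)
      ≤ ENNReal.ofReal ((2*((1:ℝ)/4)^d + ((4:ℝ)/7)^d/16) * Real.exp (-(N:ℝ))) := by
    have hsub2 : BadU ∩ cube ⊆ ⋃ m ∈ Finset.Icc 1 K, (Bad m ∩ cube) := by
      rintro t ⟨ht1, ht2⟩
      rw [hBadU, Set.mem_iUnion₂] at ht1
      obtain ⟨m, hmm, htm⟩ := ht1
      exact Set.mem_biUnion hmm ⟨htm, ht2⟩
    refine le_trans (measure_mono hsub2) (le_trans (measure_biUnion_finset_le _ _) ?_)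
    set cm : ℕ → ℝ := fun m => if (m:ℝ)*r + r/8 < s' then r/(4*m) else 4*r^2/7 with hcm
    have hcm0 : ∀ m, 0 ≤ cm m := by
      intro m; rw [hcm]; dsimp only; split_ifs <;> positivity
    have hstep : ∀ m ∈ Finset.Icc 1 K, volume (Bad m ∩ cube) ≤ ENNReal.ofReal ((cm m)^d) := by
      intro m hmm
      obtain ⟨h1, _⟩ := Finset.mem_Icc.mp hmm
      have hs3 : Bad m ∩ cube ⊆ Set.pi Set.univ (fun _ : Fin d =>
          ⋃ n ∈ Finset.Icc (0:ℤ) ⌊((m:ℝ)*r + r/8)/s'⌋,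
            Set.Ioo (((n:ℝ)*s' - r/8)/m) (((n:ℝ)*s' + r/8)/m)) := by
        rintro t ⟨htb, htc⟩
        rw [Set.mem_univ_pi]
        intro i
        exact mem_Cm d r s' hr0 hr1 hs1 m h1 t htc htb i
      refine le_trans (measure_mono hs3) ?_
      rw [volume_pi_pi, Finset.prod_const, Finset.card_univ, Fintype.card_fin]
      refine le_trans (pow_le_pow_left' (volume_Cm r hr0 hr1 s' hs1 m h1) d) ?_
      have hx : (if (m:ℝ)*r + r/8 < s' then r/(4*m) else 4*r^2/7) = cm m := rfl
      rw [hx, ← ENNReal.ofReal_pow (hcm0 m)]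
    refine le_trans (Finset.sum_le_sum hstep) ?_
    rw [← ENNReal.ofReal_sum_of_nonneg (fun m _ => by positivity)]
    apply ENNReal.ofReal_le_ofReal
    have hKr : (K:ℝ) * r^d ≤ 1/16 := by
      rw [hrd]
      have h1 : (K:ℝ) ≤ Real.exp (N:ℝ)/16 := Nat.floor_le (by positivity)
      have h2 : Real.exp (N:ℝ) * Real.exp (-(N:ℝ)) = 1 := by
        rw [← Real.exp_add]; simp
      nlinarith [Real.exp_pos (-(N:ℝ))]
    have hper : ∀ m ∈ Finset.Icc 1 K,
        (cm m)^d ≤ (1/4:ℝ)^d * r^d * (1/(m:ℝ))^2 + (4/7:ℝ)^d * (r^d)^2 := by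
      intro m hmm
      obtain ⟨h1, _⟩ := Finset.mem_Icc.mp hmm
      have hm1 : (1:ℝ) ≤ (m:ℝ) := by exact_mod_cast h1
      have e3 : (4*r^2/7:ℝ)^d = (4/7:ℝ)^d * (r^d)^2 := by
        rw [show (4*r^2/7:ℝ) = (4/7)*r^2 by ring, mul_pow, ← pow_mul, ← pow_mul,
          Nat.mul_comm]
      rw [hcm]; dsimp only
      split_ifs with hcase
      · have e4 : (r/(4*(m:ℝ)))^d = ((1/4:ℝ)^d * r^d) * (1/(m:ℝ))^d := by
          rw [show r/(4*(m:ℝ)) = ((1/4)*r)*(1/(m:ℝ)) by field_simp, mul_pow, mul_pow]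
        rw [e4]
        have h5 : (1/(m:ℝ))^d ≤ (1/(m:ℝ))^2 :=
          pow_le_pow_of_le_one (by positivity) (by rw [div_le_one (by linarith)]; linarith) hd
        have h6 : (0:ℝ) ≤ (1/4:ℝ)^d * r^d := by positivity
        nlinarith [mul_le_mul_of_nonneg_left h5 h6, pow_nonneg hr0.le d,
          sq_nonneg (r^d), pow_nonneg (by norm_num : (0:ℝ) ≤ (4/7:ℝ)) d]
      · rw [e3]
        have : (0:ℝ) ≤ (1/4:ℝ)^d * r^d * (1/(m:ℝ))^2 := by positivity
        linarith
    refine le_trans (Finset.sum_le_sum hper) ?_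
    rw [Finset.sum_add_distrib, ← Finset.mul_sum, Finset.sum_const, Nat.card_Icc]
    have hz := zeta2_bound K
    have hKc : (0:ℝ) ≤ 1/(K:ℝ) := by positivity
    have hzz : ∑ m ∈ Finset.Icc 1 K, (1/(m:ℝ))^2 ≤ 2 := by linarith
    have h7 : (0:ℝ) ≤ (1/4:ℝ)^d * r^d := by positivity
    have h8 : (K + 1 - 1 : ℕ) = K := by omega
    rw [h8, nsmul_eq_mul]
    have h9 : (K:ℝ) * ((4/7:ℝ)^d * (r^d)^2) = (4/7:ℝ)^d * ((K:ℝ)*r^d) * r^d := by ring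
    have h10 : (4/7:ℝ)^d * ((K:ℝ)*r^d) * r^d ≤ (4/7:ℝ)^d * (1/16) * r^d := by
      apply mul_le_mul_of_nonneg_right _ (pow_nonneg hr0.le d)
      exact mul_le_mul_of_nonneg_left hKr (by positivity)
    rw [← hrd]
    calc (1/4:ℝ)^d * r^d * (∑ m ∈ Finset.Icc 1 K, (1/(m:ℝ))^2)
          + (K:ℝ) * ((4/7:ℝ)^d * (r^d)^2)
        ≤ (1/4:ℝ)^d * r^d * 2 + (4/7:ℝ)^d * (1/16) * r^d := by
          rw [h9]
          have := mul_le_mul_of_nonneg_left hzz h7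
          linarith
      _ = (2*((1:ℝ)/4)^d + ((4:ℝ)/7)^d/16) * r^d := by ring
  -- assembly
  have hsplit : volume cube ≤ volume (cube \ BadU) + volume (BadU ∩ cube) := by
    refine le_trans (measure_mono ?_) (measure_union_le _ _)
    intro x hx
    by_cases h : x ∈ BadU
    · exact Or.inr ⟨h, hx⟩
    · exact Or.inl ⟨hx, h⟩
  have hdiff : volume cube - volume (BadU ∩ cube) ≤ volume (cube \ BadU) :=
    tsub_le_iff_right.mpr hsplit
  calc ENNReal.ofReal ((((15:ℝ)/16)^d - ((1:ℝ)/4)^d) * Real.exp (-(N:ℝ)))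
      ≤ ENNReal.ofReal ((1 - (2*((1:ℝ)/4)^d + ((4:ℝ)/7)^d/16)) * Real.exp (-(N:ℝ))) := by
        apply ENNReal.ofReal_le_ofReal
        exact mul_le_mul_of_nonneg_right (numeric_bound d hd) (Real.exp_pos _).le
    _ = ENNReal.ofReal (Real.exp (-(N:ℝ)))
        - ENNReal.ofReal ((2*((1:ℝ)/4)^d + ((4:ℝ)/7)^d/16) * Real.exp (-(N:ℝ))) := by
        rw [← ENNReal.ofReal_sub _ (by positivity)]
        congr 1
        ring
    _ ≤ volume cube - volume (BadU ∩ cube) := by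
        rw [hcubevol]
        exact tsub_le_tsub_left hbadvol _
    _ ≤ volume (cube \ BadU) := hdiff
    _ ≤ _ := measure_mono h_sub

/-- The set `A_N` of parameters `t ∈ [0, e^{-N/d}]^d` for which
`ht(T^N(x_t)) < 16M` has Lebesgue measure at least `(15^d/16^d - 1/4^d)e^{-N}`. -/
theorem measure_AN_ge (d : ℕ) (hd0 : 0 < d) (hd : 2 ≤ d) (M : ℝ) (hM0 : 0 < M) (hM : 1 ≤ M)
    (N : ℕ) :
    ENNReal.ofReal ((((15:ℝ)/16)^d - ((1:ℝ)/4)^d) * Real.exp (-(N:ℝ))) ≤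
      volume {t : Fin d → ℝ |
        (∀ i, t i ∈ Set.Icc (0:ℝ) (Real.exp (-(N:ℝ)/(d:ℝ)))) ∧
        htX d ((Tmap d hd0)^[N] (mkX d (gElt d hd0 M hM0 t))) < 16*M} :=
  measure_AN_ge' d hd0 hd M hM0 hM N
end

section
/- Let d ≥ 2, M ≥ 1 and let A_N' = A_N ∩ [ (1/16)e^{-N/d}, e^{-N/d} ]^d, where A_N = { t ∈ [0, e^{-N/d}]^d : ht(T^N(x_t)) < 16M }. Partition [ (1/16)e^{-N/d}, e^{-N/d} ]^d into ⌊e^N⌋^d congruent d-cubes of side length (15/16)e^{-N(d+1)/d}, and inside each take the concentric closed d-cube of side length (13/16)e^{-N(d+1)/d}. Then for all sufficiently large N, at least ⌊e^N⌋^d − ⌈(4/13)^d e^{dN}⌉ ≥ (1/13)e^{dN} of these smaller concentric d-cubes have nonempty intersection with A_N'. -/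
open MeasureTheory Filter Topology Matrix ENNReal

/-- `A_N`: parameters `t ∈ [0, e^{-N/d}]^d` with `ht(T^N(x_t)) < 16M`. -/
def ANset (d : ℕ) (hd : 0 < d) (M : ℝ) (hM : 0 < M) (N : ℕ) : Set (Fin d → ℝ) :=
  {t | (∀ i, t i ∈ Set.Icc (0:ℝ) (Real.exp (-(N:ℝ)/(d:ℝ)))) ∧
    htX d ((Tmap d hd)^[N] (mkX d (gElt d hd M hM t))) < 16*M}

/-- `A_N' = A_N ∩ [(1/16)e^{-N/d}, e^{-N/d}]^d`. -/
def ANset' (d : ℕ) (hd : 0 < d) (M : ℝ) (hM : 0 < M) (N : ℕ) : Set (Fin d → ℝ) :=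
  ANset d hd M hM N ∩
    {t | ∀ i, t i ∈ Set.Icc (Real.exp (-(N:ℝ)/(d:ℝ))/16) (Real.exp (-(N:ℝ)/(d:ℝ)))}

/-- The closed `d`-cube of side length `(13/16)e^{-N(d+1)/d}` concentric with the `k`-th cell of
the partition of `[(1/16)e^{-N/d}, e^{-N/d}]^d` into `⌊e^N⌋^d` congruent subcubes. -/
def innerCube (d N : ℕ) (k : Fin d → Fin ⌊Real.exp (N:ℝ)⌋₊) : Set (Fin d → ℝ) :=
  {t | ∀ i, t i ∈ Set.Icc
    (Real.exp (-(N:ℝ)/(d:ℝ))/16 +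
      ((k i : ℝ) + 1/2) * ((15/16) * Real.exp (-(N:ℝ)/(d:ℝ)) / (⌊Real.exp (N:ℝ)⌋₊ : ℝ)) -
      (13/16) * Real.exp (-(N:ℝ)*((d:ℝ)+1)/(d:ℝ)) / 2)
    (Real.exp (-(N:ℝ)/(d:ℝ))/16 +
      ((k i : ℝ) + 1/2) * ((15/16) * Real.exp (-(N:ℝ)/(d:ℝ)) / (⌊Real.exp (N:ℝ)⌋₊ : ℝ)) +
      (13/16) * Real.exp (-(N:ℝ)*((d:ℝ)+1)/(d:ℝ)) / 2)}


namespace St8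

variable (d N : ℕ)

/-- side length of a cell -/
noncomputable def sL : ℝ := (15/16) * Real.exp (-(N:ℝ)/(d:ℝ)) / (⌊Real.exp (N:ℝ)⌋₊ : ℝ)

/-- side length of inner cube -/
noncomputable def sig : ℝ := (13/16) * Real.exp (-(N:ℝ)*((d:ℝ)+1)/(d:ℝ))

noncomputable def cellSet (k : Fin d → Fin ⌊Real.exp (N:ℝ)⌋₊) : Set (Fin d → ℝ) :=
  Set.pi Set.univ fun i => Set.Icc
    (Real.exp (-(N:ℝ)/(d:ℝ))/16 + (k i : ℝ) * sL d N)
    (Real.exp (-(N:ℝ)/(d:ℝ))/16 + ((k i : ℝ) + 1) * sL d N)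

lemma one_le_nfloor : 1 ≤ ⌊Real.exp (N:ℝ)⌋₊ := by
  rw [Nat.le_floor_iff (le_of_lt (Real.exp_pos _))]
  simpa using Real.one_le_exp (by positivity)

lemma nfloor_pos : (0:ℝ) < (⌊Real.exp (N:ℝ)⌋₊ : ℝ) := by
  exact_mod_cast Nat.lt_of_lt_of_le Nat.zero_lt_one (one_le_nfloor N)

lemma sL_pos : 0 < sL d N := by
  have := nfloor_pos N
  have := Real.exp_pos (-(N:ℝ)/(d:ℝ))
  unfold sL; positivity

lemma sig_pos : 0 < sig d N := by unfold sig; positivity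

lemma exp_split (hd0 : 0 < d) :
    Real.exp (-(N:ℝ)*((d:ℝ)+1)/(d:ℝ)) =
      Real.exp (-(N:ℝ)/(d:ℝ)) * Real.exp (-(N:ℝ)) := by
  rw [← Real.exp_add]
  congr 1
  have hd : (d:ℝ) ≠ 0 := Nat.cast_ne_zero.mpr hd0.ne'
  field_simp
  ring

lemma sig_le_sL (hd0 : 0 < d) : sig d N ≤ sL d N := by
  have hfl : (⌊Real.exp (N:ℝ)⌋₊ : ℝ) ≤ Real.exp (N:ℝ) :=
    Nat.floor_le (le_of_lt (Real.exp_pos _))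
  have hpos := nfloor_pos N
  have hε := Real.exp_pos (-(N:ℝ)/(d:ℝ))
  rw [sig, exp_split d N hd0, sL]
  rw [Real.exp_neg (N:ℝ)]
  rw [← mul_assoc, ← div_eq_mul_inv]
  exact div_le_div₀ (by positivity) (by nlinarith) hpos hfl

end St8

namespace St8
variable (d N : ℕ)

lemma volume_cellSet (k : Fin d → Fin ⌊Real.exp (N:ℝ)⌋₊) :
    volume (cellSet d N k) = ENNReal.ofReal (sL d N) ^ d := by
  rw [cellSet, volume_pi_pi]
  have : ∀ i : Fin d, volume (Set.Icc
      (Real.exp (-(N:ℝ)/(d:ℝ))/16 + (k i : ℝ) * sL d N)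
      (Real.exp (-(N:ℝ)/(d:ℝ))/16 + ((k i : ℝ) + 1) * sL d N))
      = ENNReal.ofReal (sL d N) := by
    intro i
    rw [Real.volume_Icc]
    congr 1
    ring
  simp only [this, Finset.prod_const, Finset.card_univ, Fintype.card_fin]

lemma innerCube_eq (k : Fin d → Fin ⌊Real.exp (N:ℝ)⌋₊) :
    innerCube d N k = Set.pi Set.univ fun i => Set.Icc
      (Real.exp (-(N:ℝ)/(d:ℝ))/16 + ((k i : ℝ) + 1/2) * sL d N - sig d N / 2)
      (Real.exp (-(N:ℝ)/(d:ℝ))/16 + ((k i : ℝ) + 1/2) * sL d N + sig d N / 2) := by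
  ext t
  simp only [innerCube, Set.mem_setOf_eq, Set.mem_univ_pi, sL, sig, Set.mem_Icc]

lemma volume_innerCube (k : Fin d → Fin ⌊Real.exp (N:ℝ)⌋₊) :
    volume (innerCube d N k) = ENNReal.ofReal (sig d N) ^ d := by
  rw [innerCube_eq, volume_pi_pi]
  have : ∀ i : Fin d, volume (Set.Icc
      (Real.exp (-(N:ℝ)/(d:ℝ))/16 + ((k i : ℝ) + 1/2) * sL d N - sig d N / 2)
      (Real.exp (-(N:ℝ)/(d:ℝ))/16 + ((k i : ℝ) + 1/2) * sL d N + sig d N / 2))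
      = ENNReal.ofReal (sig d N) := by
    intro i
    rw [Real.volume_Icc]
    congr 1
    ring
  simp only [this, Finset.prod_const, Finset.card_univ, Fintype.card_fin]

lemma innerCube_subset_cell (hd0 : 0 < d) (k : Fin d → Fin ⌊Real.exp (N:ℝ)⌋₊) :
    innerCube d N k ⊆ cellSet d N k := by
  rw [innerCube_eq, cellSet]
  refine Set.pi_mono fun i _ => Set.Icc_subset_Icc ?_ ?_
  · have := sig_le_sL d N hd0
    have := sig_pos d N
    nlinarith
  · have := sig_le_sL d N hd0
    have := sig_pos d N
    nlinarith

end St8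



namespace St8
variable (d N : ℕ)

lemma nmul_sL : (⌊Real.exp (N:ℝ)⌋₊ : ℝ) * sL d N = 15/16 * Real.exp (-(N:ℝ)/(d:ℝ)) := by
  rw [sL, mul_div_cancel₀ _ (nfloor_pos N).ne']

lemma box_subset_iUnion_cell :
    {t : Fin d → ℝ | ∀ i, t i ∈ Set.Icc (Real.exp (-(N:ℝ)/(d:ℝ))/16) (Real.exp (-(N:ℝ)/(d:ℝ)))}
      ⊆ ⋃ k : Fin d → Fin ⌊Real.exp (N:ℝ)⌋₊, cellSet d N k := by
  intro t ht
  have hn1 : 1 ≤ ⌊Real.exp (N:ℝ)⌋₊ := one_le_nfloor N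
  have hs := sL_pos d N
  set n := ⌊Real.exp (N:ℝ)⌋₊ with hn
  set ε := Real.exp (-(N:ℝ)/(d:ℝ)) with hε
  set s := sL d N with hsdef
  refine Set.mem_iUnion.mpr ⟨fun i => ⟨min ⌊(t i - ε/16)/s⌋₊ (n-1), by omega⟩, ?_⟩
  intro i _
  set u := t i - ε/16 with hu
  have hu0 : 0 ≤ u := by have := (ht i).1; simp only [hu]; linarith
  have huU : u ≤ (n:ℝ) * s := by
    have := (ht i).2
    have h2 := nmul_sL d N
    simp only [hu]
    rw [← hn, ← hsdef] at h2
    rw [h2]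
    linarith
  simp only [Set.mem_Icc]
  rcases le_or_gt ⌊u/s⌋₊ (n-1) with hc | hc
  · rw [min_eq_left hc]
    have h1 : (⌊u/s⌋₊ : ℝ) * s ≤ u := (le_div_iff₀ hs).mp (Nat.floor_le (by positivity))
    have h2 : u < ((⌊u/s⌋₊ : ℝ) + 1) * s := by
      have := Nat.lt_floor_add_one (u/s)
      rw [div_lt_iff₀ hs] at this
      exact this
    constructor <;> simp only [hu] at h1 h2 <;> linarith
  · rw [min_eq_right hc.le]
    have hcast : ((n - 1 : ℕ) : ℝ) = (n:ℝ) - 1 := by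
      rw [Nat.cast_sub hn1, Nat.cast_one]
    have h1 : (n:ℝ) ≤ (⌊u/s⌋₊ : ℝ) := by exact_mod_cast Nat.le_of_pred_lt hc
    have h2 : (n:ℝ) * s ≤ u :=
      (le_div_iff₀ hs).mp (le_trans h1 (Nat.floor_le (by positivity)))
    rw [hcast]
    constructor <;> simp only [hu] at h2 huU <;> nlinarith

end St8


namespace St8

open scoped Classical in
lemma card_bad_le (d : ℕ) (hd0 : 0 < d) (M : ℝ) (hM0 : 0 < M) (N : ℕ)
    (hvol : ENNReal.ofReal ((((15:ℝ)/16)^d - ((1:ℝ)/4)^d) * Real.exp (-(N:ℝ))) ≤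
      volume (ANset' d hd0 M hM0 N)) :
    ((Finset.univ.filter (fun k : Fin d → Fin ⌊Real.exp (N:ℝ)⌋₊ =>
        ¬ (innerCube d N k ∩ ANset' d hd0 M hM0 N).Nonempty)).card : ℝ)
      ≤ (4/13)^d * Real.exp ((d:ℝ)*N) := by
  have hsp := sL_pos d N
  have hgp := sig_pos d N
  have hVpos : (0:ℝ) ≤ (((15:ℝ)/16)^d - ((1:ℝ)/4)^d) * Real.exp (-(N:ℝ)) := by
    have : ((1:ℝ)/4)^d ≤ ((15:ℝ)/16)^d := pow_le_pow_left₀ (by norm_num) (by norm_num) d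
    have := Real.exp_pos (-(N:ℝ))
    nlinarith
  set A := ANset' d hd0 M hM0 N with hA
  set B := Finset.univ.filter (fun k : Fin d → Fin ⌊Real.exp (N:ℝ)⌋₊ =>
        ¬ (innerCube d N k ∩ A).Nonempty) with hBdef
  set s := sL d N with hsdef
  set σ := sig d N with hσdef
  have hsub : A ⊆ ⋃ k, cellSet d N k := fun t ht => box_subset_iUnion_cell d N ht.2
  have h2 : volume A ≤ ∑ k : Fin d → Fin ⌊Real.exp (N:ℝ)⌋₊, volume (A ∩ cellSet d N k) := by
    calc volume A = volume (⋃ k, A ∩ cellSet d N k) := by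
          rw [← Set.inter_iUnion, Set.inter_eq_self_of_subset_left hsub]
      _ ≤ _ := measure_iUnion_fintype_le _ _
  have hstep : ∀ k : Fin d → Fin ⌊Real.exp (N:ℝ)⌋₊,
      volume (A ∩ cellSet d N k) + (if k ∈ B then ENNReal.ofReal σ ^ d else 0)
        ≤ ENNReal.ofReal s ^ d := by
    intro k
    by_cases hk : k ∈ B
    · simp only [hk, if_true]
      have hdisj : Disjoint (A ∩ cellSet d N k) (innerCube d N k) := by
        rw [hBdef, Finset.mem_filter] at hk
        rw [Set.disjoint_left]
        intro t ht hti
        exact hk.2 ⟨t, hti, ht.1⟩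
      have hmeas : MeasurableSet (innerCube d N k) := by
        rw [innerCube_eq]
        exact MeasurableSet.univ_pi fun i => measurableSet_Icc
      rw [← volume_innerCube d N k, ← volume_cellSet d N k, ← measure_union hdisj hmeas]
      exact measure_mono (Set.union_subset Set.inter_subset_right
        (innerCube_subset_cell d N hd0 k))
    · simp only [hk, if_false, add_zero]
      rw [← volume_cellSet d N k]
      exact measure_mono Set.inter_subset_right
  have key : ENNReal.ofReal ((((15:ℝ)/16)^d - ((1:ℝ)/4)^d) * Real.exp (-(N:ℝ)))
      + (B.card : ℝ≥0∞) * ENNReal.ofReal σ ^ d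
      ≤ ((⌊Real.exp (N:ℝ)⌋₊ ^ d : ℕ) : ℝ≥0∞) * ENNReal.ofReal s ^ d := by
    calc _ ≤ volume A + (B.card : ℝ≥0∞) * ENNReal.ofReal σ ^ d := add_le_add hvol le_rfl
      _ ≤ (∑ k : Fin d → Fin ⌊Real.exp (N:ℝ)⌋₊, volume (A ∩ cellSet d N k))
          + ∑ k : Fin d → Fin ⌊Real.exp (N:ℝ)⌋₊,
              (if k ∈ B then ENNReal.ofReal σ ^ d else 0) := by
          refine add_le_add h2 (le_of_eq ?_)
          rw [Finset.sum_ite_mem, Finset.univ_inter, Finset.sum_const, nsmul_eq_mul]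
      _ = ∑ k : Fin d → Fin ⌊Real.exp (N:ℝ)⌋₊,
            (volume (A ∩ cellSet d N k) + (if k ∈ B then ENNReal.ofReal σ ^ d else 0)) :=
          (Finset.sum_add_distrib).symm
      _ ≤ ∑ _k : Fin d → Fin ⌊Real.exp (N:ℝ)⌋₊, ENNReal.ofReal s ^ d :=
          Finset.sum_le_sum fun k _ => hstep k
      _ = _ := by
          simp [Fintype.card_fun, nsmul_eq_mul]
  have hr : (((15:ℝ)/16)^d - ((1:ℝ)/4)^d) * Real.exp (-(N:ℝ)) + (B.card : ℝ) * σ ^ d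
      ≤ ((⌊Real.exp (N:ℝ)⌋₊:ℝ) ^ d) * s ^ d := by
    rw [← ENNReal.ofReal_pow hgp.le, ← ENNReal.ofReal_pow hsp.le,
      ← ENNReal.ofReal_natCast B.card, ← ENNReal.ofReal_natCast (⌊Real.exp (N:ℝ)⌋₊ ^ d),
      ← ENNReal.ofReal_mul (by positivity), ← ENNReal.ofReal_mul (by positivity),
      ← ENNReal.ofReal_add hVpos (by positivity),
      ENNReal.ofReal_le_ofReal_iff (by positivity)] at key
    push_cast at key ⊢
    linarith
  have hdne : (d:ℝ) ≠ 0 := Nat.cast_ne_zero.mpr hd0.ne'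
  have hεd : Real.exp (-(N:ℝ)/(d:ℝ)) ^ d = Real.exp (-(N:ℝ)) := by
    rw [← Real.exp_nat_mul]
    congr 1
    field_simp
  have hns : (⌊Real.exp (N:ℝ)⌋₊:ℝ) ^ d * s ^ d = (15/16)^d * Real.exp (-(N:ℝ)) := by
    rw [← mul_pow, hsdef, nmul_sL, mul_pow, hεd]
  have h1 : Real.exp (-(N:ℝ)*((d:ℝ)+1)/(d:ℝ)) ^ d = Real.exp (-(N:ℝ)*((d:ℝ)+1)) := by
    rw [← Real.exp_nat_mul]
    congr 1
    field_simp
  have h2' : Real.exp ((d:ℝ)*N) * Real.exp (-(N:ℝ)*((d:ℝ)+1)) = Real.exp (-(N:ℝ)) := by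
    rw [← Real.exp_add]
    congr 1
    ring
  have hσd : ((4:ℝ)/13)^d * Real.exp ((d:ℝ)*N) * σ ^ d
      = (1/4)^d * Real.exp (-(N:ℝ)) := by
    rw [hσdef, sig, mul_pow, h1]
    calc ((4:ℝ)/13)^d * Real.exp ((d:ℝ)*N) * ((13/16)^d * Real.exp (-(N:ℝ)*((d:ℝ)+1)))
        = (((4:ℝ)/13)*(13/16))^d * (Real.exp ((d:ℝ)*N) * Real.exp (-(N:ℝ)*((d:ℝ)+1))) := by
          rw [mul_pow]; ring
      _ = (1/4)^d * Real.exp (-(N:ℝ)) := by rw [h2']; norm_num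
  have hb : (B.card:ℝ) * σ^d ≤ (1/4)^d * Real.exp (-(N:ℝ)) := by
    rw [hns] at hr
    have hex := Real.exp_pos (-(N:ℝ))
    nlinarith
  rw [← hσd] at hb
  exact le_of_mul_le_mul_right hb (by positivity)

end St8

set_option maxHeartbeats 1000000 in
/-- For all large `N`, at least `⌊e^N⌋^d - ⌈(4/13)^d e^{dN}⌉ ≥ (1/13)e^{dN}` of
the concentric subcubes meet `A_N'`. -/
theorem count_innerCubes_meeting_AN' (d : ℕ) (hd0 : 0 < d) (hd : 2 ≤ d)
    (M : ℝ) (hM0 : 0 < M) (hM : 1 ≤ M)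
    (hvol : ∀ N : ℕ, ENNReal.ofReal ((((15:ℝ)/16)^d - ((1:ℝ)/4)^d) * Real.exp (-(N:ℝ))) ≤
      volume (ANset' d hd0 M hM0 N)) :
    ∃ N₀ : ℕ, ∀ N : ℕ, N₀ ≤ N →
      ((⌊Real.exp (N:ℝ)⌋₊ : ℝ)^d - (⌈((4:ℝ)/13)^d * Real.exp ((d:ℝ)*N)⌉₊ : ℝ)) ≤
        (Nat.card {k : Fin d → Fin ⌊Real.exp (N:ℝ)⌋₊ //
          (innerCube d N k ∩ ANset' d hd0 M hM0 N).Nonempty} : ℝ) ∧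
      Real.exp ((d:ℝ)*N) / 13 ≤
        ((⌊Real.exp (N:ℝ)⌋₊ : ℝ)^d - (⌈((4:ℝ)/13)^d * Real.exp ((d:ℝ)*N)⌉₊ : ℝ)) := by
  classical
  refine ⟨2*d, fun N hN => ?_⟩
  set n := ⌊Real.exp (N:ℝ)⌋₊ with hn
  set x := ((4:ℝ)/13)^d * Real.exp ((d:ℝ)*N) with hx
  have hB := St8.card_bad_le d hd0 M hM0 N (hvol N)
  set P : (Fin d → Fin n) → Prop :=
    fun k => (innerCube d N k ∩ ANset' d hd0 M hM0 N).Nonempty with hP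
  have hKcard : Nat.card {k : Fin d → Fin n // P k} = (Finset.univ.filter P).card := by
    rw [Nat.card_eq_fintype_card, Fintype.card_subtype]
  have hsum : (Finset.univ.filter P).card + (Finset.univ.filter fun k => ¬ P k).card
      = n ^ d := by
    rw [Finset.card_filter_add_card_filter_not, Finset.card_univ]
    simp [Fintype.card_fun]
  have hB' : ((Finset.univ.filter fun k => ¬ P k).card : ℝ) ≤ x := hB
  have hceil : ((Finset.univ.filter fun k => ¬ P k).card : ℝ) ≤ (⌈x⌉₊ : ℝ) :=
    le_trans hB' (Nat.le_ceil x)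
  have hsumR : ((Finset.univ.filter P).card : ℝ)
      + ((Finset.univ.filter fun k => ¬ P k).card : ℝ) = (n:ℝ) ^ d := by
    exact_mod_cast hsum
  -- numeric bounds
  set E := Real.exp (N:ℝ) with hE
  have hEd : Real.exp ((d:ℝ)*(N:ℝ)) = E ^ d := Real.exp_nat_mul (N:ℝ) d
  have hd2 : (2:ℝ) ≤ (d:ℝ) := by exact_mod_cast hd
  have hE2d : Real.exp ((2*d : ℕ):ℝ) ≤ E := Real.exp_le_exp.mpr (by exact_mod_cast hN)
  have h2d1 : ((2*d : ℕ):ℝ) + 1 ≤ Real.exp ((2*d : ℕ):ℝ) := Real.add_one_le_exp _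
  have hcast2d : ((2*d : ℕ):ℝ) = 2*(d:ℝ) := by push_cast; ring
  have hE5 : 5 ≤ E := by rw [hcast2d] at hE2d h2d1; linarith
  have hE1 : 1 ≤ E := by linarith
  set y := Real.exp (-(N:ℝ)) with hy
  have hy_pos : 0 < y := Real.exp_pos _
  have hyE : E * y = 1 := by rw [hE, hy, ← Real.exp_add]; simp
  have hy1 : y ≤ 1 := by nlinarith
  have h2dy : 2*(d:ℝ) * y ≤ 1 := by
    have h2dE : 2*(d:ℝ) ≤ E := by rw [hcast2d] at hE2d h2d1; linarith
    nlinarith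
  have hber : 1 - (d:ℝ)*y ≤ (1 - y)^d := by
    have := one_add_mul_le_pow (a := -y) (by linarith) d
    simpa [mul_neg, ← sub_eq_add_neg] using this
  have hhalf : (1:ℝ)/2 ≤ (1 - y)^d := by
    have : (d:ℝ)*y ≤ 1/2 := by linarith
    linarith
  have hn_lb : E - 1 ≤ (n:ℝ) := (Nat.sub_one_lt_floor _).le
  have hE1' : (0:ℝ) ≤ E - 1 := by linarith
  have hnd : (E - 1)^d ≤ (n:ℝ)^d := pow_le_pow_left₀ hE1' hn_lb d
  have hfac : (E - 1)^d = E^d * (1-y)^d := by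
    rw [← mul_pow]
    congr 1
    rw [mul_sub, mul_one, hyE]
  have hEd_pos : (0:ℝ) < E^d := by positivity
  have hnd_lb : E^d/2 ≤ (n:ℝ)^d := by
    have h1 := mul_le_mul_of_nonneg_left hhalf hEd_pos.le
    rw [hfac] at hnd
    linarith
  have hxnn : (0:ℝ) ≤ x := by rw [hx]; positivity
  have hceil2 : (⌈x⌉₊:ℝ) ≤ x + 1 := (Nat.ceil_lt_add_one hxnn).le
  have h413 : ((4:ℝ)/13)^d ≤ 16/169 := by
    have h := pow_le_pow_of_le_one (by norm_num : (0:ℝ) ≤ 4/13) (by norm_num) hd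
    calc ((4:ℝ)/13)^d ≤ ((4:ℝ)/13)^2 := h
      _ = 16/169 := by norm_num
  have hE4 : (4:ℝ) ≤ E^d := by
    have : E ≤ E^d := le_self_pow₀ hE1 hd0.ne'
    linarith
  have hxb : x ≤ 16/169 * E^d := by
    rw [hx, hEd]
    exact mul_le_mul_of_nonneg_right h413 hEd_pos.le
  have hmain : Real.exp ((d:ℝ)*(N:ℝ)) / 13 ≤ ((n:ℝ)^d - (⌈x⌉₊ : ℝ)) := by
    rw [hEd]
    linarith
  refine ⟨?_, hmain⟩
  rw [hKcard]
  push_cast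
  linarith
end
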